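/- Let X be a type, t a natural number, and 𝒞 a finite concept class over X that is K_{t, 2^t}-free. Then 𝒞 shatters no finite set S ⊆ X with |S| = 2t; in particular the VC dimension of 𝒞 is strictly less than 2t. -/

import Mathlib

/-- The concept class `𝒞` contains `K_{s,t}`: there are a finite set `S ⊆ X` of size `s`
and a subset `𝒯 ⊆ 𝒞` of size `t` with `c x = true` for all `x ∈ S`, `c ∈ 𝒯`. -/
def ContainsK {X : Type*} (𝒞 : Finset (X → Bool)) (s t : ℕ) : Prop :=
  ∃ S : Finset X, S.card = s ∧ ∃ 𝒯 ⊆ 𝒞, 𝒯.card = t ∧ ∀ x ∈ S, ∀ c ∈ 𝒯, c x = true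

theorem vc_lt_of_biclique_free {X : Type*} (t : ℕ) (𝒞 : Finset (X → Bool))
    (hfree : ¬ ContainsK 𝒞 t (2 ^ t)) :
    ∀ S : Finset X, S.card = 2 * t →
      ¬ (∀ g : X → Bool, ∃ c ∈ 𝒞, ∀ x ∈ S, c x = g x) := by
  classical
  intro S hS hshat
  obtain ⟨A, hAS, hA⟩ := Finset.exists_subset_card_eq (s := S) (n := t) (by omega)
  set B : Finset X := S \ A with hBdef
  have hB : B.card = t := by
    rw [hBdef, Finset.card_sdiff_of_subset hAS, hS, hA]; omega
  have hch : ∀ T : Finset X, ∃ c ∈ 𝒞, ∀ x ∈ S,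
      c x = decide (x ∈ A ∨ x ∈ T) :=
    fun T => hshat (fun x => decide (x ∈ A ∨ x ∈ T))
  choose c hcmem hcval using hch
  apply hfree
  refine ⟨A, hA, B.powerset.image c, ?_, ?_, ?_⟩
  · intro f hf
    obtain ⟨T, _, rfl⟩ := Finset.mem_image.mp hf
    exact hcmem T
  · rw [Finset.card_image_of_injOn, Finset.card_powerset, hB]
    intro T hT T' hT' heq
    rw [Finset.mem_coe, Finset.mem_powerset] at hT hT'
    ext x
    by_cases hxB : x ∈ B
    · have hxS : x ∈ S := (Finset.sdiff_subset) hxB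
      have hxA : x ∉ A := (Finset.mem_sdiff.mp hxB).2
      have h1 := hcval T x hxS
      have h2 := hcval T' x hxS
      rw [heq] at h1
      rw [h1] at h2
      simp [hxA] at h2
      simp [h2]
    · constructor <;> intro hx
      · exact absurd (hT hx) hxB
      · exact absurd (hT' hx) hxB
  · intro x hxA f hf
    obtain ⟨T, _, rfl⟩ := Finset.mem_image.mp hf
    rw [hcval T x (hAS hxA)]
    simp [hxA]
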